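/- Let N > M ≥ 1 be coprime integers, α ∈ ℂ, let τ : ℤ → ℂ satisfy τ_m ≠ 0 for all m, and let β : ℤ → ℂ satisfy β_{m+M} = β_m for all m. If τ satisfies the bilinear equation τ_{m+2N+M} τ_m = β_m τ_{m+N+M} τ_{m+N} − α τ_{m+2N} τ_{m+M} for all m ∈ ℤ, then the sequence v_m := (τ_m τ_{m+N+M})/(τ_{m+M} τ_{m+N}) satisfies the (N,M) travelling-wave reduction of the lattice KdV equation, v_{m+N+M} − v_m = α(1/v_{m+N} − 1/v_{m+M}), for all m ∈ ℤ. -/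

import Mathlib

lemma kdv_frac_aux (α a b c d e f g h i B : ℂ)
    (hb : b ≠ 0) (hc : c ≠ 0) (hd : d ≠ 0) (hf : f ≠ 0) (hh : h ≠ 0)
    (h1 : h * a = B * (d * c) - α * (g * b))
    (h2 : i * b = B * (f * d) - α * (h * e)) :
    d * i / (f * h) - a * d / (b * c) = α * (1 / (c * h / (d * g)) - 1 / (b * f / (e * d))) := by
  field_simp
  linear_combination c*h2 - f*h1

/-- If a nowhere-vanishing `τ : ℤ → ℂ` satisfies the bilinear equation
`τ_{m+2N+M} τ_m = β_m τ_{m+N+M} τ_{m+N} − α τ_{m+2N} τ_{m+M}` with `β` periodic of period `M`,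
then `v_m = (τ_m τ_{m+N+M})/(τ_{m+M} τ_{m+N})` satisfies the `(N,M)` travelling-wave
reduction of the lattice KdV equation. -/
theorem bilinear_first_implies_kdvReduction
    (N M : ℕ) (hM : 1 ≤ M) (hMN : M < N) (hcop : Nat.Coprime N M) (α : ℂ)
    (τ : ℤ → ℂ) (hτ : ∀ m : ℤ, τ m ≠ 0)
    (β : ℤ → ℂ) (hβ : ∀ m : ℤ, β (m + M) = β m)
    (hbil : ∀ m : ℤ, τ (m + 2 * N + M) * τ m =
        β m * (τ (m + N + M) * τ (m + N)) - α * (τ (m + 2 * N) * τ (m + M)))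
    (v : ℤ → ℂ)
    (hv : ∀ m : ℤ, v m = τ m * τ (m + N + M) / (τ (m + M) * τ (m + N))) :
    ∀ m : ℤ, v (m + N + M) - v m = α * (1 / v (m + N) - 1 / v (m + M)) := by
  intro m
  have h1 := hbil m
  have h2 := hbil (m + M)
  rw [hβ] at h2
  simp only [hv]
  have e1 : m + (M:ℤ) + 2*N + M = m + 2*N + 2*M := by ring
  have e2 : m + (M:ℤ) + N + M = m + N + 2*M := by ring
  have e3 : m + (M:ℤ) + N = m + N + M := by ring
  have e4 : m + (M:ℤ) + 2*N = m + 2*N + M := by ring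
  have e5 : m + (M:ℤ) + M = m + 2*M := by ring
  rw [e1, e2, e3, e4, e5] at h2
  have e6 : m + (N:ℤ) + M + N + M = m + 2*N + 2*M := by ring
  have e7 : m + (N:ℤ) + M + M = m + N + 2*M := by ring
  have e8 : m + (N:ℤ) + M + N = m + 2*N + M := by ring
  have e11 : m + (N:ℤ) + N = m + 2*N := by ring
  have e9 : m + (N:ℤ) + N + M = m + 2*N + M := by ring
  rw [e6, e7, e8, e9, e11, e2, e3, e5]
  exact kdv_frac_aux α (τ m) (τ (m+M)) (τ (m+N)) (τ (m+N+M)) (τ (m+2*M))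
    (τ (m+N+2*M)) (τ (m+2*N)) (τ (m+2*N+M)) (τ (m+2*N+2*M)) (β m)
    (hτ _) (hτ _) (hτ _) (hτ _) (hτ _) h1 h2
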